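/- If ν has finite second moment m₂ = ∫_0^∞ l² ν(dl) < ∞, then for every z ≥ 0, lim_{t→(1/m)⁻} (1−mt)^{−1} κ^{(t)}((1−mt)² z) = (m/m₂)(√(1 + 2(m₂/m) z) − 1). -/

import Mathlib

open MeasureTheory Filter

/-- The Laplace exponent `Ψ^(t)(ρ) = -ρ + t ∫_0^∞ (1 - e^{-ρ l}) ν(dl)`. -/
noncomputable def Psi (ν : Measure ℝ) (t ρ : ℝ) : ℝ :=
  -ρ + t * ∫ l, (1 - Real.exp (-(ρ * l))) ∂ν

lemma mono_aux {f f' : ℝ → ℝ} (hd : ∀ x, HasDerivAt f (f' x) x)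
    (h0 : ∀ x, 0 ≤ x → 0 ≤ f' x) {x : ℝ} (hx : 0 ≤ x) : f 0 ≤ f x := by
  have hmono : MonotoneOn f (Set.Ici 0) := by
    apply monotoneOn_of_deriv_nonneg (convex_Ici 0)
      (fun y _ => (hd y).continuousAt.continuousWithinAt)
      (fun y _ => (hd y).differentiableAt.differentiableWithinAt)
    intro y hy
    rw [(hd y).deriv]
    exact h0 y (le_of_lt (by simpa using hy))
  exact hmono Set.self_mem_Ici (Set.mem_Ici.mpr hx) hx

lemma hd_expneg (y : ℝ) : HasDerivAt (fun x : ℝ => Real.exp (-x)) (-Real.exp (-y)) y := by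
  simpa using ((hasDerivAt_id y).neg).exp

lemma aux_le (x : ℝ) (hx : 0 ≤ x) : 1 - Real.exp (-x) ≤ x := by
  nlinarith [Real.add_one_le_exp (-x)]

lemma aux_nonneg (x : ℝ) : 0 ≤ Real.exp (-x) - 1 + x := by
  nlinarith [Real.add_one_le_exp (-x)]

lemma aux_upper (x : ℝ) (hx : 0 ≤ x) : Real.exp (-x) - 1 + x ≤ x ^ 2 / 2 := by
  have hd : ∀ y : ℝ, HasDerivAt (fun x : ℝ => x ^ 2 / 2 - (Real.exp (-x) - 1 + x))
      (y - (-Real.exp (-y) + 1)) y := by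
    intro y
    have h := ((hasDerivAt_pow 2 y).div_const 2).sub
      (((hd_expneg y).sub_const 1).add (hasDerivAt_id y))
    exact h.congr_deriv (by simp)
  have := mono_aux hd (fun y hy => by nlinarith [Real.add_one_le_exp (-y)]) hx
  simp at this
  linarith

lemma aux_lower (x : ℝ) (hx : 0 ≤ x) :
    x ^ 2 / 2 * Real.exp (-x) ≤ Real.exp (-x) - 1 + x := by
  -- first: (1 - x) * exp x ≤ 1 - x^2/2
  have key : (1 - x) * Real.exp x ≤ 1 - x ^ 2 / 2 := by
    have hd : ∀ y : ℝ, HasDerivAt (fun x : ℝ => 1 - x ^ 2 / 2 - (1 - x) * Real.exp x)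
        (-(2 * y / 2) - ((-1) * Real.exp y + (1 - y) * Real.exp y)) y := by
      intro y
      have h1 : HasDerivAt (fun x : ℝ => 1 - x ^ 2 / 2) (-(2 * y / 2)) y := by
        simpa using (((hasDerivAt_pow 2 y).div_const 2).const_sub 1).congr_deriv (by ring)
      have h2 : HasDerivAt (fun x : ℝ => (1 - x) * Real.exp x)
          ((-1) * Real.exp y + (1 - y) * Real.exp y) y :=
        ((hasDerivAt_id y).const_sub 1).mul (Real.hasDerivAt_exp y)
      exact h1.sub h2
    have := mono_aux hd (fun y hy => by nlinarith [Real.add_one_le_exp y, Real.exp_pos y]) hx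
    simp at this
    linarith
  have he : Real.exp (-x) * Real.exp x = 1 := by
    rw [← Real.exp_add]; simp
  nlinarith [Real.exp_pos (-x), Real.exp_pos x]

lemma alg_lemma {c u z : ℝ} (hc : 0 ≤ c) (hu : 0 ≤ u) (h : c * u ^ 2 + u = z) :
    u = 2 * z / (1 + Real.sqrt (1 + 4 * c * z)) := by
  have hs : Real.sqrt (1 + 4 * c * z) = 2 * c * u + 1 := by
    rw [show 1 + 4 * c * z = (2 * c * u + 1) ^ 2 by nlinarith]
    exact Real.sqrt_sq (by positivity)
  rw [hs, eq_div_iff (by positivity)]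
  nlinarith

lemma meas1 (ν : Measure ℝ) (ρ : ℝ) :
    AEStronglyMeasurable (fun l : ℝ => 1 - Real.exp (-(ρ * l))) ν :=
  (Continuous.aestronglyMeasurable (by continuity))

lemma meas3 (ν : Measure ℝ) (ρ : ℝ) :
    AEStronglyMeasurable (fun l : ℝ => l ^ 2 * Real.exp (-(ρ * l))) ν :=
  (Continuous.aestronglyMeasurable (by continuity))

/-- Let `ν` be a measure on `(0,∞)` with finite positive mean `m` and finite second
moment `m₂`, and for `t ∈ [0,1/m)` let `κ^(t)` be the inverse function of `-Ψ^(t)`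
on `[0,∞)`. Then for every `z ≥ 0`,
`lim_{t→(1/m)⁻} (1-mt)⁻¹ κ^(t)((1-mt)² z) = (m/m₂)(√(1 + 2(m₂/m) z) - 1)`. -/
theorem kappa_rescaled_limit_finite_second_moment
    (ν : Measure ℝ) (hν0 : ν (Set.Iic 0) = 0)
    (hint : Integrable (fun l : ℝ => l) ν)
    (m : ℝ) (hm : m = ∫ l, l ∂ν) (hmpos : 0 < m)
    (hint2 : Integrable (fun l : ℝ => l ^ 2) ν)
    (m2 : ℝ) (hm2 : m2 = ∫ l, l ^ 2 ∂ν)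
    (κ : ℝ → ℝ → ℝ)
    (hκ : ∀ t : ℝ, 0 ≤ t → t < 1 / m → ∀ z : ℝ, 0 ≤ z →
      0 ≤ κ t z ∧ -Psi ν t (κ t z) = z)
    (hκ' : ∀ t : ℝ, 0 ≤ t → t < 1 / m → ∀ ρ : ℝ, 0 ≤ ρ →
      κ t (-Psi ν t ρ) = ρ)
    (z : ℝ) (hz : 0 ≤ z) :
    Tendsto (fun t : ℝ => (1 - m * t)⁻¹ * κ t ((1 - m * t) ^ 2 * z))
      (nhdsWithin (1 / m) (Set.Iio (1 / m)))
      (nhds ((m / m2) * (Real.sqrt (1 + 2 * (m2 / m) * z) - 1))) := by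
  have hpos : ∀ᵐ l ∂ν, 0 < l := by
    rw [ae_iff]
    simpa [not_lt, Set.Iic] using hν0
  have hI1 : ∀ ρ : ℝ, 0 ≤ ρ → Integrable (fun l : ℝ => 1 - Real.exp (-(ρ * l))) ν := by
    intro ρ hρ
    apply Integrable.mono (hint.const_mul ρ) (meas1 ν ρ)
    filter_upwards [hpos] with l hl
    have hx : 0 ≤ ρ * l := mul_nonneg hρ hl.le
    rw [Real.norm_eq_abs, Real.norm_eq_abs]
    rw [abs_of_nonneg (by nlinarith [Real.exp_le_one_iff.mpr (neg_nonpos.mpr hx)] :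
      (0:ℝ) ≤ 1 - Real.exp (-(ρ*l)))]
    rw [abs_of_nonneg hx]
    have := Real.add_one_le_exp (-(ρ * l))
    linarith
  have hI2 : ∀ ρ : ℝ, 0 ≤ ρ → Integrable (fun l : ℝ => Real.exp (-(ρ * l)) - 1 + ρ * l) ν := by
    intro ρ hρ
    have := (hint.const_mul ρ).sub (hI1 ρ hρ)
    exact this.congr (Filter.Eventually.of_forall fun l => by simp; ring)
  have hI3 : ∀ ρ : ℝ, 0 ≤ ρ → Integrable (fun l : ℝ => l ^ 2 * Real.exp (-(ρ * l))) ν := by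
    intro ρ hρ
    apply Integrable.mono hint2 (meas3 ν ρ)
    filter_upwards [hpos] with l hl
    have hx : 0 ≤ ρ * l := mul_nonneg hρ hl.le
    rw [Real.norm_eq_abs, Real.norm_eq_abs, abs_of_nonneg (by positivity),
      abs_of_nonneg (by positivity : (0:ℝ) ≤ l ^ 2)]
    nlinarith [Real.exp_le_one_iff.mpr (neg_nonpos.mpr hx), Real.exp_pos (-(ρ*l)), sq_nonneg l]
  set F : ℝ → ℝ := fun ρ => ∫ l, (Real.exp (-(ρ * l)) - 1 + ρ * l) ∂ν with hFdef
  -- the key formula for -Psi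
  have hPsi : ∀ t ρ : ℝ, 0 ≤ ρ → -Psi ν t ρ = (1 - t * m) * ρ + t * F ρ := by
    intro t ρ hρ
    have h1 : (fun l : ℝ => 1 - Real.exp (-(ρ * l)))
        = fun l => ρ * l - (Real.exp (-(ρ * l)) - 1 + ρ * l) := by
      funext l; ring
    have h2 : ∫ l, (1 - Real.exp (-(ρ * l))) ∂ν = ρ * m - F ρ := by
      rw [h1, integral_sub (hint.const_mul ρ) (hI2 ρ hρ), integral_const_mul, hm, hFdef]
    rw [Psi, h2]; ring
  -- F is nonnegative
  have hF0 : ∀ ρ : ℝ, 0 ≤ ρ → 0 ≤ F ρ := by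
    intro ρ hρ
    apply integral_nonneg_of_ae
    filter_upwards [hpos] with l hl
    exact aux_nonneg (ρ * l)
  -- F upper bound
  have hFup : ∀ ρ : ℝ, 0 ≤ ρ → F ρ ≤ ρ ^ 2 / 2 * m2 := by
    intro ρ hρ
    have : F ρ ≤ ∫ l, ρ ^ 2 / 2 * l ^ 2 ∂ν := by
      apply integral_mono_ae (hI2 ρ hρ) (hint2.const_mul _)
      filter_upwards [hpos] with l hl
      have := aux_upper (ρ * l) (mul_nonneg hρ hl.le)
      calc Real.exp (-(ρ * l)) - 1 + ρ * l ≤ (ρ * l) ^ 2 / 2 := this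
        _ = ρ ^ 2 / 2 * l ^ 2 := by ring
    rwa [integral_const_mul, ← hm2] at this
  -- F lower bound
  have hFlo : ∀ ρ : ℝ, 0 ≤ ρ → ρ ^ 2 / 2 * ∫ l, l ^ 2 * Real.exp (-(ρ * l)) ∂ν ≤ F ρ := by
    intro ρ hρ
    have : ∫ l, ρ ^ 2 / 2 * (l ^ 2 * Real.exp (-(ρ * l))) ∂ν ≤ F ρ := by
      apply integral_mono_ae ((hI3 ρ hρ).const_mul _) (hI2 ρ hρ)
      filter_upwards [hpos] with l hl
      have := aux_lower (ρ * l) (mul_nonneg hρ hl.le)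
      calc ρ ^ 2 / 2 * (l ^ 2 * Real.exp (-(ρ * l)))
          = (ρ * l) ^ 2 / 2 * Real.exp (-(ρ * l)) := by ring
        _ ≤ Real.exp (-(ρ * l)) - 1 + ρ * l := this
    rwa [integral_const_mul] at this
  -- positivity of m2
  have hm2pos : 0 < m2 := by
    have hνuniv : ν Set.univ ≠ 0 := by
      intro h
      rw [Measure.measure_univ_eq_zero.mp h] at hm
      simp at hm
      linarith
    have hsupp : ν (Function.support fun l : ℝ => l ^ 2)ᶜ = 0 := by
      apply measure_mono_null _ (by rw [ae_iff] at hpos; exact hpos)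
      intro l hl
      simp [Function.support] at hl ⊢
      nlinarith [hl]
    rw [hm2]
    rw [integral_pos_iff_support_of_nonneg_ae
      (Filter.Eventually.of_forall fun l => sq_nonneg l) hint2]
    by_contra h
    push_neg at h
    have h' : ν (Function.support fun l : ℝ => l ^ 2) = 0 := le_antisymm (by exact h) (zero_le)
    apply hνuniv
    have hcover : ν Set.univ ≤ ν (Function.support fun l : ℝ => l ^ 2)
        + ν (Function.support fun l : ℝ => l ^ 2)ᶜ :=
      (measure_mono (by rw [Set.union_compl_self])).trans (measure_union_le _ _)
    rw [h', hsupp, add_zero] at hcover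
    exact le_antisymm hcover (zero_le)
  -- filter basics
  have him : (0:ℝ) < 1/m := by positivity
  have ht_lt : ∀ᶠ t in nhdsWithin (1/m) (Set.Iio (1/m)), t < 1/m :=
    eventually_mem_nhdsWithin
  have ht_pos : ∀ᶠ t in nhdsWithin (1/m) (Set.Iio (1/m)), 0 < t :=
    eventually_nhdsWithin_of_eventually_nhds (eventually_gt_nhds him)
  have htm : Tendsto (fun t : ℝ => t) (nhdsWithin (1/m) (Set.Iio (1/m))) (nhds (1/m)) :=
    tendsto_id.mono_left nhdsWithin_le_nhds
  have hε : Tendsto (fun t : ℝ => 1 - m * t) (nhdsWithin (1/m) (Set.Iio (1/m))) (nhds 0) := by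
    have h := tendsto_const_nhds (x := (1:ℝ))
      (f := nhdsWithin (1/m) (Set.Iio (1/m))) |>.sub (htm.const_mul m)
    simpa [mul_inv_cancel₀ hmpos.ne'] using h
  have hεpos : ∀ᶠ t in nhdsWithin (1/m) (Set.Iio (1/m)), 0 < 1 - m * t := by
    filter_upwards [ht_lt] with t ht
    have : t * m < 1 := (lt_div_iff₀ hmpos).mp ht
    nlinarith
  -- case z = 0
  rcases eq_or_lt_of_le hz with hz0 | hzpos
  · have htarget : (m/m2) * (Real.sqrt (1 + 2*(m2/m)*z) - 1) = 0 := by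
      rw [← hz0]
      norm_num
    rw [htarget]
    apply Tendsto.congr' _ (tendsto_const_nhds (x := (0:ℝ)))
    filter_upwards [ht_lt, ht_pos] with t h1 h2
    have hκ0 : κ t 0 = 0 := by
      have h := hκ' t h2.le h1 0 le_rfl
      simpa [Psi] using h
    rw [← hz0]
    simp [hκ0]
  -- case z > 0
  set ρf : ℝ → ℝ := fun t => κ t ((1 - m*t)^2 * z) with hρfdef
  have hF00 : F 0 = 0 := by simp [hFdef]
  have hbase : ∀ᶠ t in nhdsWithin (1/m) (Set.Iio (1/m)),
      0 ≤ ρf t ∧ (1 - t*m) * ρf t + t * F (ρf t) = (1 - m*t)^2 * z ∧ 0 < ρf t := by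
    filter_upwards [ht_lt, ht_pos, hεpos] with t h1 h2 h3
    obtain ⟨hk0, hk1⟩ := hκ t h2.le h1 ((1 - m*t)^2 * z) (by positivity)
    rw [hPsi t _ hk0] at hk1
    refine ⟨hk0, hk1, ?_⟩
    rcases eq_or_lt_of_le hk0 with he | he
    · exfalso
      rw [← he, hF00] at hk1
      simp at hk1
      rcases hk1 with h | h <;> linarith
    · exact he
  have hρ0 : Tendsto ρf (nhdsWithin (1/m) (Set.Iio (1/m))) (nhds 0) := by
    apply tendsto_of_tendsto_of_tendsto_of_le_of_le'
      (tendsto_const_nhds (x := (0:ℝ))) (by simpa using hε.mul_const z)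
    · filter_upwards [hbase] with t ht
      exact ht.1
    · filter_upwards [hbase, ht_pos, hεpos] with t ht h2 h3
      have hF0' : 0 ≤ F (ρf t) := hF0 _ ht.1
      have heq := ht.2.1
      have : (1 - t*m) * ρf t ≤ (1 - m*t)^2 * z := by nlinarith
      have h4 : (1 - t*m) = (1 - m*t) := by ring
      rw [h4] at this
      calc ρf t = ((1 - m*t) * ρf t) / (1 - m*t) := by field_simp
        _ ≤ ((1 - m*t)^2 * z) / (1 - m*t) := (div_le_div_iff_of_pos_right h3).mpr this
        _ = (1 - m*t) * z := by field_simp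
  -- dominated convergence for H
  have hH : Tendsto (fun t => ∫ l, l^2 * Real.exp (-(ρf t * l)) ∂ν)
      (nhdsWithin (1/m) (Set.Iio (1/m))) (nhds m2) := by
    rw [hm2]
    apply tendsto_integral_filter_of_dominated_convergence (fun l => l^2)
    · exact Filter.Eventually.of_forall fun t => meas3 ν (ρf t)
    · filter_upwards [hbase] with t ht
      filter_upwards [hpos] with l hl
      have hx : 0 ≤ ρf t * l := mul_nonneg ht.1 hl.le
      rw [Real.norm_eq_abs, abs_of_nonneg (by positivity)]
      nlinarith [Real.exp_le_one_iff.mpr (neg_nonpos.mpr hx), Real.exp_pos (-(ρf t * l)),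
        sq_nonneg l]
    · exact hint2
    · filter_upwards [hpos] with l hl
      have h1 : Tendsto (fun t => -(ρf t * l)) (nhdsWithin (1/m) (Set.Iio (1/m)))
          (nhds 0) := by
        simpa using (hρ0.mul_const l).neg
      have h2 : Tendsto (fun t => Real.exp (-(ρf t * l)))
          (nhdsWithin (1/m) (Set.Iio (1/m))) (nhds 1) := by
        have h5 := (Real.continuous_exp.tendsto 0).comp h1
        rw [Real.exp_zero] at h5
        exact h5
      simpa using (tendsto_const_nhds (x := l^2)).mul h2
  -- Q = F(ρ)/ρ² tends to m2/2
  have hQ : Tendsto (fun t => F (ρf t) / (ρf t)^2)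
      (nhdsWithin (1/m) (Set.Iio (1/m))) (nhds (m2/2)) := by
    apply tendsto_of_tendsto_of_tendsto_of_le_of_le' (hH.div_const 2)
      (tendsto_const_nhds (x := m2/2))
    · filter_upwards [hbase] with t ht
      rw [le_div_iff₀ (pow_pos ht.2.2 2)]
      nlinarith [hFlo (ρf t) ht.1]
    · filter_upwards [hbase] with t ht
      rw [div_le_iff₀ (pow_pos ht.2.2 2)]
      nlinarith [hFup (ρf t) ht.1]
  have hc : Tendsto (fun t => t * (F (ρf t) / (ρf t)^2))
      (nhdsWithin (1/m) (Set.Iio (1/m))) (nhds (1/m * (m2/2))) := htm.mul hQ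
  -- limit of the explicit formula
  have hfinal : Tendsto
      (fun t => 2*z / (1 + Real.sqrt (1 + 4*(t * (F (ρf t)/(ρf t)^2))*z)))
      (nhdsWithin (1/m) (Set.Iio (1/m)))
      (nhds (2*z / (1 + Real.sqrt (1 + 2*(m2/m)*z)))) := by
    have hinner : Tendsto (fun t => 1 + 4*(t * (F (ρf t)/(ρf t)^2))*z)
        (nhdsWithin (1/m) (Set.Iio (1/m))) (nhds (1 + 2*(m2/m)*z)) := by
      have := ((hc.const_mul 4).mul_const z).const_add 1
      have harg : 1 + 4*(1/m*(m2/2))*z = 1 + 2*(m2/m)*z := by ring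
      rwa [harg] at this
    have hsqrt : Tendsto (fun t => Real.sqrt (1 + 4*(t * (F (ρf t)/(ρf t)^2))*z))
        (nhdsWithin (1/m) (Set.Iio (1/m))) (nhds (Real.sqrt (1 + 2*(m2/m)*z))) :=
      (Real.continuous_sqrt.tendsto _).comp hinner
    exact tendsto_const_nhds.div (hsqrt.const_add 1)
      (by positivity)
  -- eventual equality
  have heq : ∀ᶠ t in nhdsWithin (1/m) (Set.Iio (1/m)),
      2*z / (1 + Real.sqrt (1 + 4*(t * (F (ρf t)/(ρf t)^2))*z))
        = (1 - m * t)⁻¹ * κ t ((1 - m * t) ^ 2 * z) := by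
    filter_upwards [hbase, hεpos, ht_pos] with t hb h3 h2
    have hρpos : 0 < ρf t := hb.2.2
    have hFt : 0 ≤ F (ρf t) := hF0 _ hb.1
    have hcnn : 0 ≤ t * (F (ρf t)/(ρf t)^2) := by positivity
    have hunn : 0 ≤ ρf t / (1 - m*t) := by positivity
    have hεne : (1 - m*t) ≠ 0 := ne_of_gt h3
    have hρne : ρf t ≠ 0 := ne_of_gt hρpos
    have hkey : (t * (F (ρf t)/(ρf t)^2)) * (ρf t / (1 - m*t))^2 + ρf t / (1 - m*t) = z := by
      have h4 : (t * (F (ρf t)/(ρf t)^2)) * (ρf t / (1 - m*t))^2 + ρf t / (1 - m*t)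
          = ((1 - t*m) * ρf t + t * F (ρf t))/(1-m*t)^2 := by
        field_simp
        ring
      rw [h4, hb.2.1, mul_div_cancel_left₀ _ (pow_ne_zero 2 hεne)]
    have := alg_lemma hcnn hunn hkey
    rw [← this, div_eq_inv_mul]
  have hgoal : (m/m2) * (Real.sqrt (1+2*(m2/m)*z) - 1)
      = 2*z/(1 + Real.sqrt (1+2*(m2/m)*z)) := by
    have hs : Real.sqrt (1+2*(m2/m)*z) ^ 2 = 1+2*(m2/m)*z :=
      Real.sq_sqrt (by positivity)
    have hsnn : 0 ≤ Real.sqrt (1+2*(m2/m)*z) := Real.sqrt_nonneg _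
    set s := Real.sqrt (1+2*(m2/m)*z) with hsdef
    have hs' : m * s^2 = m + 2*m2*z := by
      rw [hs]
      field_simp
    rw [eq_div_iff (by positivity)]
    field_simp
    linear_combination hs'
  rw [hgoal]
  exact Tendsto.congr' heq hfinal
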